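/- Let F be a finite field with q elements, let K be an algebraic closure of F, let n ≥ 1, and let f be a monic polynomial of degree n in F[x]. Then Σ sgn(σ), where the sum is over all pairs ((z_1, …, z_n), σ) with (z_1, …, z_n) ∈ K^n satisfying f = ∏_{j=1}^n (x − z_j) (as polynomials over K) and σ a permutation of {1, …, n} with z_j^q = z_{σ(j)} for all j, equals (−1)^n · n! · μ(f). -/

import Mathlib

open scoped Classical

/-- The Möbius function for polynomials over a field: `μ f = (-1) ^ k` if `f` is squarefree
with exactly `k` monic irreducible factors, and `μ f = 0` otherwise. -/
noncomputable def polyMoebius {F : Type*} [Field F] (f : Polynomial F) : ℤ :=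
  if Squarefree f then
    (-1) ^ Multiset.card (UniqueFactorizationMonoid.normalizedFactors f) else 0

open Polynomial
set_option linter.unusedSectionVars false
set_option maxHeartbeats 1000000

namespace SSRO

section
variable {F : Type*} [Field F] [Fintype F] {K : Type*} [Field K] [Algebra F K] [IsAlgClosure F K]

lemma exists_qfrob : ∃ φ : K →+* K, ∀ x, φ x = x ^ Fintype.card F := by
  obtain ⟨p, hp⟩ := CharP.exists F
  obtain ⟨n, hpp, hcard⟩ := FiniteField.card F p
  haveI : Fact p.Prime := ⟨hpp⟩
  haveI : CharP K p := charP_of_injective_algebraMap (algebraMap F K).injective p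
  haveI : ExpChar K p := ExpChar.prime hpp
  exact ⟨iterateFrobenius K p n, fun x => by rw [iterateFrobenius_def, hcard]⟩

noncomputable def qfrob (F : Type*) [Field F] [Fintype F] {K : Type*} [Field K] [Algebra F K]
    [IsAlgClosure F K] : K →+* K := (exists_qfrob (F := F) (K := K)).choose

lemma qfrob_apply (x : K) : qfrob F x = x ^ Fintype.card F :=
  (exists_qfrob (F := F) (K := K)).choose_spec x

lemma pow_card_injective : Function.Injective (fun x : K => x ^ Fintype.card F) := by
  have := (qfrob F (K := K)).injective
  simpa only [funext (qfrob_apply (F := F) (K := K))] using this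

lemma qfrob_comp_algebraMap :
    (qfrob F (K := K)).comp (algebraMap F K) = algebraMap F K := by
  ext a
  rw [RingHom.comp_apply, qfrob_apply, ← map_pow, FiniteField.pow_card]

lemma map_qfrob (f : Polynomial F) :
    (f.map (algebraMap F K)).map (qfrob F) = f.map (algebraMap F K) := by
  rw [Polynomial.map_map, qfrob_comp_algebraMap]

lemma root_pow_card {f : Polynomial F} {α : K}
    (h : (f.map (algebraMap F K)).eval α = 0) :
    (f.map (algebraMap F K)).eval (α ^ Fintype.card F) = 0 := by
  have := Polynomial.eval₂_hom (qfrob F (K := K)) α (p := f.map (algebraMap F K))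
  rw [h, map_zero] at this
  rw [← qfrob_apply, ← this, ← Polynomial.eval_map, map_qfrob]

lemma mem_range_of_pow_card {x : K} (h : x ^ Fintype.card F = x) :
    ∃ a : F, algebraMap F K a = x := by
  set q := Fintype.card F with hq'
  have hq : 1 < q := Fintype.one_lt_card
  set P : K[X] := X ^ q - X with hP
  have hdeg : P.natDegree = q := by
    rw [hP]
    compute_degree
    · rw [if_neg (by omega : ¬ 1 = q)]; norm_num
    · omega
  have hPne : P ≠ 0 := by
    intro h0
    rw [h0, Polynomial.natDegree_zero] at hdeg
    omega
  have hroot : ∀ a : F, P.eval (algebraMap F K a) = 0 := by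
    intro a
    have : (algebraMap F K a) ^ q = algebraMap F K a := by
      rw [← map_pow, FiniteField.pow_card]
    simp [hP, this]
  have hM : (Finset.univ.val.map fun a : F => algebraMap F K a) ≤ P.roots := by
    rw [Multiset.le_iff_subset ((Finset.univ.nodup.map (algebraMap F K).injective))]
    intro y hy
    obtain ⟨a, _, rfl⟩ := Multiset.mem_map.1 hy
    exact (Polynomial.mem_roots hPne).2 (hroot a)
  have hMeq : (Finset.univ.val.map fun a : F => algebraMap F K a) = P.roots := by
    refine Multiset.eq_of_le_of_card_le hM ?_
    calc Multiset.card P.roots ≤ P.natDegree := P.card_roots'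
    _ = q := hdeg
    _ = Multiset.card (Finset.univ.val.map fun a : F => algebraMap F K a) := by simp [hq']
  have hx : x ∈ P.roots := (Polynomial.mem_roots hPne).2 (by simp [hP, h])
  rw [← hMeq] at hx
  obtain ⟨a, _, ha⟩ := Multiset.mem_map.1 hx
  exact ⟨a, ha⟩

lemma pow_card_pow_injective (i : ℕ) :
    Function.Injective (fun x : K => x ^ Fintype.card F ^ i) := by
  induction i with
  | zero => simp only [pow_zero, pow_one]; exact Function.injective_id
  | succ i ih =>
    have h1 := (qfrob F (K := K)).injective
    have h2 : ∀ x : K, x ^ Fintype.card F ^ (i+1) = qfrob F (x ^ Fintype.card F ^ i) := by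
      intro x; rw [qfrob_apply, ← pow_mul, pow_succ]
    intro x y hxy
    simp only [h2] at hxy
    exact ih (h1 hxy)

theorem irreducible_orbit {g : Polynomial F} (hgi : Irreducible g) (hgm : g.Monic) {α : K}
    (hα : (g.map (algebraMap F K)).eval α = 0) :
    g.map (algebraMap F K) =
        ∏ i ∈ Finset.range g.natDegree, (X - C (α ^ Fintype.card F ^ i)) ∧
      (∀ i < g.natDegree, ∀ j < g.natDegree,
        α ^ Fintype.card F ^ i = α ^ Fintype.card F ^ j → i = j) ∧
      α ^ Fintype.card F ^ g.natDegree = α := by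
  set q := Fintype.card F with hq
  set ι := algebraMap F K with hι
  have hgmap : (g.map ι).Monic := hgm.map ι
  have hgne : g.map ι ≠ 0 := hgmap.ne_zero
  -- all iterates are roots
  have hiter : ∀ i, (g.map ι).eval (α ^ q ^ i) = 0 := by
    intro i
    induction i with
    | zero => simpa using hα
    | succ i ih =>
      have := root_pow_card (f := g) (K := K) ih
      rwa [← pow_mul, ← pow_succ] at this
  -- existence of a period
  have hper : ∃ m, 0 < m ∧ α ^ q ^ m = α := by
    have : ¬ Function.Injective
        (fun i : ℕ => (⟨α ^ q ^ i, by
          rw [Multiset.mem_toFinset, mem_roots hgne]; exact hiter i⟩ :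
          {x : K // x ∈ (g.map ι).roots.toFinset})) := fun hinj =>
      Set.infinite_range_of_injective hinj (Set.toFinite _)
    rw [Function.not_injective_iff] at this
    obtain ⟨i, j, hij, hne⟩ := this
    rcases Nat.lt_or_ge i j with h | h
    · refine ⟨j - i, by omega, ?_⟩
      have : (α ^ q ^ (j - i)) ^ q ^ i = α ^ q ^ i := by
        rw [← pow_mul, ← pow_add]
        have : j - i + i = j := by omega
        rw [this]
        exact (congrArg Subtype.val hij).symm
      exact pow_card_pow_injective i this
    · have hji : j < i := by omega
      refine ⟨i - j, by omega, ?_⟩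
      have : (α ^ q ^ (i - j)) ^ q ^ j = α ^ q ^ j := by
        rw [← pow_mul, ← pow_add]
        have : i - j + j = i := by omega
        rw [this]
        exact congrArg Subtype.val hij
      exact pow_card_pow_injective j this
  set m := Nat.find hper with hm
  obtain ⟨hmpos, hmper⟩ : 0 < m ∧ α ^ q ^ m = α := Nat.find_spec hper
  have hmin : ∀ k, 0 < k → k < m → α ^ q ^ k ≠ α := fun k hk1 hk2 =>
    fun h => Nat.find_min hper hk2 ⟨hk1, h⟩
  -- injectivity on range m
  have hinjm : ∀ i < m, ∀ j < m, α ^ q ^ i = α ^ q ^ j → i = j := by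
    have key : ∀ i j, i < j → j < m → α ^ q ^ i ≠ α ^ q ^ j := by
      intro i j hij hjm heq
      have : (α ^ q ^ (j - i)) ^ q ^ i = α ^ q ^ i := by
        rw [← pow_mul, ← pow_add]
        have h' : j - i + i = j := by omega
        rw [h']; exact heq.symm
      exact hmin (j - i) (by omega) (by omega) (pow_card_pow_injective i this)
    intro i hi j hj heq
    rcases Nat.lt_trichotomy i j with h | h | h
    · exact absurd heq (key i j h hj)
    · exact h
    · exact absurd heq.symm (key j i h hi)
  -- the orbit polynomial
  set h : K[X] := ∏ i ∈ Finset.range m, (X - C (α ^ q ^ i)) with hh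
  have hhmonic : h.Monic := monic_prod_of_monic _ _ fun i _ => monic_X_sub_C _
  have hhdeg : h.natDegree = m := by
    rw [hh, natDegree_prod _ _ fun i _ => X_sub_C_ne_zero _]
    rw [Finset.sum_congr rfl fun i _ => natDegree_X_sub_C (α ^ q ^ i)]
    simp
  -- h is fixed by frobenius
  have hfix : h.map (qfrob F) = h := by
    have hmap : h.map (qfrob F) = ∏ i ∈ Finset.range m, (X - C (α ^ q ^ (i + 1))) := by
      rw [hh, Polynomial.map_prod]
      refine Finset.prod_congr rfl fun i _ => ?_
      rw [Polynomial.map_sub, Polynomial.map_X, Polynomial.map_C, qfrob_apply,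
        ← pow_mul, ← pow_succ]
    have hcancel : (∏ i ∈ Finset.range m, (X - C (α ^ q ^ (i + 1)))) * (X - C (α ^ q ^ 0)) =
        h * (X - C (α ^ q ^ 0)) := by
      rw [← Finset.prod_range_succ' (fun i => X - C (α ^ q ^ i)) m, Finset.prod_range_succ,
        hh, hmper]
      ring_nf
    rw [hmap]
    exact mul_right_cancel₀ (X_sub_C_ne_zero _) hcancel
  -- h comes from F
  have hlift : h ∈ Polynomial.lifts ι := by
    rw [Polynomial.lifts_iff_coeff_lifts]
    intro k
    have : (h.map (qfrob F)).coeff k = h.coeff k := by rw [hfix]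
    rw [Polynomial.coeff_map, qfrob_apply] at this
    exact mem_range_of_pow_card this
  obtain ⟨h₀, hh₀map, hh₀deg, hh₀monic⟩ :=
    Polynomial.lifts_and_natDegree_eq_and_monic hlift hhmonic
  -- g = minpoly, divides h₀
  have haev : (Polynomial.aeval α) g = 0 := by
    rw [Polynomial.aeval_def, ← Polynomial.eval_map]; exact hα
  have hgmin : g = minpoly F α := minpoly.eq_of_irreducible_of_monic hgi haev hgm
  have haevh : (Polynomial.aeval α) h₀ = 0 := by
    rw [Polynomial.aeval_def, ← Polynomial.eval_map, hh₀map, hh, eval_prod]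
    refine Finset.prod_eq_zero (Finset.mem_range.2 hmpos) ?_
    simp
  have hdvd1 : g ∣ h₀ := hgmin ▸ minpoly.dvd F α haevh
  have hdm : g.natDegree ≤ m := by
    have := Polynomial.natDegree_le_of_dvd hdvd1 hh₀monic.ne_zero
    omega
  -- h divides g.map
  have hMle : ((Finset.range m).val.map fun i => α ^ q ^ i) ≤ (g.map ι).roots := by
    rw [Multiset.le_iff_subset (Multiset.Nodup.map_on
      (fun i hi j hj hij => hinjm i (Finset.mem_range.1 (by exact hi)) j
        (Finset.mem_range.1 (by exact hj)) hij) (Finset.range m).nodup)]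
    intro y hy
    obtain ⟨i, _, rfl⟩ := Multiset.mem_map.1 hy
    exact (mem_roots hgne).2 (hiter i)
  have hhdvd : h ∣ g.map ι := by
    have h1 : h = (((Finset.range m).val.map fun i => α ^ q ^ i).map fun a => X - C a).prod := by
      rw [hh, Multiset.map_map, Finset.prod_eq_multiset_prod]
      rfl
    rw [h1]
    exact dvd_trans (Multiset.prod_dvd_prod_of_le (Multiset.map_le_map hMle))
      (prod_multiset_X_sub_C_dvd (g.map ι))
  have hmd' : m ≤ g.natDegree := by
    have := Polynomial.natDegree_le_of_dvd hhdvd hgne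
    rw [hhdeg, hgm.natDegree_map] at this
    exact this
  have hmd : m = g.natDegree := le_antisymm hmd' hdm
  have hgh : g.map ι = h := by
    refine (Polynomial.eq_of_monic_of_associated hhmonic hgmap ?_).symm
    refine Polynomial.associated_of_dvd_of_natDegree_le hhdvd hgne ?_
    rw [hhdeg, hgm.natDegree_map, hmd]
  rw [← hmd]
  exact ⟨hgh, hinjm, hmper⟩


noncomputable def rootsK (K : Type*) [Field K] [Algebra F K] (f : Polynomial F) : Finset K :=
  (f.map (algebraMap F K)).roots.toFinset

lemma mem_rootsK {f : Polynomial F} {x : K} :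
    x ∈ rootsK K f ↔ x ∈ (f.map (algebraMap F K)).roots := Multiset.mem_toFinset

lemma mem_rootsK_pow {f : Polynomial F} {x : K} (hx : x ∈ rootsK K f) :
    x ^ Fintype.card F ∈ rootsK K f := by
  rw [mem_rootsK, Polynomial.mem_roots'] at hx ⊢
  exact ⟨hx.1, root_pow_card hx.2⟩

noncomputable def frobPerm (K : Type*) [Field K] [Algebra F K] [IsAlgClosure F K]
    (f : Polynomial F) : Equiv.Perm {x : K // x ∈ rootsK K f} :=
  Equiv.ofBijective (fun x => ⟨x.1 ^ Fintype.card F, mem_rootsK_pow x.2⟩)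
    (Finite.injective_iff_bijective.1 fun a b hab =>
      Subtype.ext (pow_card_injective (congrArg Subtype.val hab)))

lemma frobPerm_apply (f : Polynomial F) (x : {x : K // x ∈ rootsK K f}) :
    (frobPerm K f x : K) = (x : K) ^ Fintype.card F := rfl

lemma sign_frobPerm_irreducible {g : Polynomial F} (hgi : Irreducible g) (hgm : g.Monic) :
    Equiv.Perm.sign (frobPerm K g) = (-1) ^ (g.natDegree + 1) := by
  haveI : IsAlgClosed K := IsAlgClosure.isAlgClosed F
  set q := Fintype.card F with hq
  set ι := algebraMap F K with hι
  have hdpos : 0 < g.natDegree := hgi.natDegree_pos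
  have hgne : g.map ι ≠ 0 := (hgm.map ι).ne_zero
  obtain ⟨α, hα⟩ : ∃ α : K, (g.map ι).eval α = 0 := by
    apply IsAlgClosed.exists_root (g.map ι)
    intro h0
    rw [Polynomial.degree_eq_natDegree hgne, hgm.natDegree_map] at h0
    have : g.natDegree = 0 := by exact_mod_cast h0
    omega
  obtain ⟨hprod, hinj, hper⟩ := irreducible_orbit hgi hgm hα
  have hroots : (g.map ι).roots =
      (Finset.range g.natDegree).val.map (fun i => α ^ q ^ i) := by
    rw [hprod]
    have : ∏ i ∈ Finset.range g.natDegree, (X - C (α ^ q ^ i)) =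
        (((Finset.range g.natDegree).val.map (fun i => α ^ q ^ i)).map
          fun a => X - C a).prod := by
      rw [Multiset.map_map, Finset.prod_eq_multiset_prod]; rfl
    rw [this, roots_multiset_prod_X_sub_C]
  obtain ⟨d', hd'⟩ : ∃ d', g.natDegree = d' + 1 := ⟨g.natDegree - 1, by omega⟩
  rw [hd'] at hroots hinj hper
  have hvmem : ∀ i : Fin (d' + 1), α ^ q ^ (i : ℕ) ∈ rootsK K g := by
    intro i
    rw [mem_rootsK, hroots]
    exact Multiset.mem_map.2 ⟨(i : ℕ), Finset.mem_range.2 i.2, rfl⟩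
  set v : Fin (d' + 1) → {x : K // x ∈ rootsK K g} :=
    fun i => ⟨α ^ q ^ (i : ℕ), hvmem i⟩ with hv
  have hvinj : Function.Injective v := by
    intro i j hij
    exact Fin.ext (hinj i i.2 j j.2 (congrArg Subtype.val hij))
  have hvsurj : Function.Surjective v := by
    rintro ⟨x, hx⟩
    rw [mem_rootsK, hroots] at hx
    obtain ⟨i, hi, rfl⟩ := Multiset.mem_map.1 hx
    exact ⟨⟨i, Finset.mem_range.1 hi⟩, rfl⟩
  set e : Fin (d' + 1) ≃ {x : K // x ∈ rootsK K g} := Equiv.ofBijective v ⟨hvinj, hvsurj⟩ with he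
  have hkey : frobPerm K g = e.permCongr (finRotate (d' + 1)) := by
    apply Equiv.ext
    intro x
    obtain ⟨i, rfl⟩ := e.surjective x
    rw [Equiv.permCongr_apply, Equiv.symm_apply_apply]
    have hei : e i = v i := rfl
    apply Subtype.ext
    rw [hei, frobPerm_apply]
    have : (e (finRotate (d' + 1) i) : K) = v (i + 1) := by rw [finRotate_succ_apply]; rfl
    rw [this]
    show (α ^ q ^ (i : ℕ)) ^ q = α ^ q ^ (((i + 1 : Fin (d' + 1))) : ℕ)
    rw [← pow_mul, ← pow_succ]
    rcases Nat.lt_or_ge ((i : ℕ) + 1) (d' + 1) with hlt | hge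
    · congr 1
      rw [Fin.val_add_one]
      rw [if_neg]
      intro hlast
      rw [hlast] at hlt
      simp [Fin.last] at hlt
    · have hieq : (i : ℕ) = d' := by have := i.2; omega
      have h1 : (i : ℕ) + 1 = d' + 1 := by omega
      rw [h1, hper]
      have h2 : i + 1 = 0 := by
        apply Fin.ext
        rw [Fin.val_add_one, if_pos (Fin.ext hieq)]
        simp
      rw [h2]
      simp
  rw [hkey, Equiv.Perm.sign_permCongr, sign_finRotate, hd']
  rw [pow_add, pow_succ]
  simp

lemma sign_frobPerm_mul {g c : Polynomial F} (hg : g.Monic) (hc : c.Monic)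
    (hsq : Squarefree (g * c)) :
    Equiv.Perm.sign (frobPerm K (g * c)) =
      Equiv.Perm.sign (frobPerm K g) * Equiv.Perm.sign (frobPerm K c) := by
  set ι := algebraMap F K with hι
  have hgcm : (g * c).Monic := hg.mul hc
  have hmapne : (g * c).map ι ≠ 0 := (hgcm.map ι).ne_zero
  have hgne : g.map ι ≠ 0 := (hg.map ι).ne_zero
  have hcne : c.map ι ≠ 0 := (hc.map ι).ne_zero
  have hsep : ((g * c).map ι).Separable :=
    ((PerfectField.separable_iff_squarefree).2 hsq).map
  have hnodup : ((g * c).map ι).roots.Nodup := nodup_roots hsep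
  have hradd : ((g * c).map ι).roots = (g.map ι).roots + (c.map ι).roots := by
    rw [Polynomial.map_mul, roots_mul (by rw [← Polynomial.map_mul]; exact hmapne)]
  have hdisj : ∀ {x : K}, x ∈ (g.map ι).roots → x ∉ (c.map ι).roots := by
    rw [hradd, Multiset.nodup_add] at hnodup
    exact fun hx => Multiset.disjoint_left.1 hnodup.2.2 hx
  have hsubg : ∀ {x : K}, x ∈ rootsK K g → x ∈ rootsK K (g * c) := by
    intro x hx
    rw [mem_rootsK] at hx ⊢
    rw [hradd]
    exact Multiset.mem_add.2 (Or.inl hx)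
  have hsubc : ∀ {x : K}, x ∈ rootsK K c → x ∈ rootsK K (g * c) := by
    intro x hx
    rw [mem_rootsK] at hx ⊢
    rw [hradd]
    exact Multiset.mem_add.2 (Or.inr hx)
  set j : {x : K // x ∈ rootsK K g} ⊕ {x : K // x ∈ rootsK K c} →
      {x : K // x ∈ rootsK K (g * c)} :=
    Sum.elim (fun a => ⟨a.1, hsubg a.2⟩) (fun b => ⟨b.1, hsubc b.2⟩) with hj
  have hjinj : Function.Injective j := by
    rintro (a | a) (b | b) hab <;>
      simp only [hj, Sum.elim_inl, Sum.elim_inr, Subtype.mk.injEq] at hab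
    · exact congrArg Sum.inl (Subtype.ext hab)
    · exact absurd (by rw [hab]; exact mem_rootsK.1 b.2)
        (hdisj (mem_rootsK.1 a.2))
    · exact absurd (by rw [← hab]; exact mem_rootsK.1 a.2)
        (hdisj (mem_rootsK.1 b.2))
    · exact congrArg Sum.inr (Subtype.ext hab)
  have hjsurj : Function.Surjective j := by
    rintro ⟨x, hx⟩
    rw [mem_rootsK, hradd, Multiset.mem_add] at hx
    rcases hx with hx | hx
    · exact ⟨Sum.inl ⟨x, by rwa [mem_rootsK]⟩, rfl⟩
    · exact ⟨Sum.inr ⟨x, by rwa [mem_rootsK]⟩, rfl⟩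
  set E := Equiv.ofBijective j ⟨hjinj, hjsurj⟩ with hE
  have hkey : frobPerm K (g * c) =
      E.permCongr (Equiv.Perm.sumCongr (frobPerm K g) (frobPerm K c)) := by
    apply Equiv.ext
    intro x
    obtain ⟨y, rfl⟩ := E.surjective x
    rw [Equiv.permCongr_apply, Equiv.symm_apply_apply]
    rcases y with a | b
    · exact Subtype.ext rfl
    · exact Subtype.ext rfl
  rw [hkey, Equiv.Perm.sign_permCongr, Equiv.Perm.sign_sumCongr]

lemma sign_frobPerm (N : ℕ) : ∀ (f : Polynomial F), f.Monic → Squarefree f →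
    f.natDegree = N →
    Equiv.Perm.sign (frobPerm K f) =
      (-1) ^ (N + Multiset.card (UniqueFactorizationMonoid.normalizedFactors f)) := by
  induction N using Nat.strong_induction_on with
  | _ N ih =>
  intro f hfm hsf hdeg
  rcases Nat.eq_zero_or_pos N with hN | hN
  · have hf1 : f = 1 := hfm.natDegree_eq_zero.1 (by omega)
    subst hf1
    have hempty : rootsK K (1 : Polynomial F) = ∅ := by
      rw [rootsK, Polynomial.map_one, roots_one]
      rfl
    have : IsEmpty {x : K // x ∈ rootsK K (1 : Polynomial F)} :=
      ⟨fun x => Finset.notMem_empty x.1 (hempty ▸ x.2)⟩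
    have h1 : frobPerm K (1 : Polynomial F) = 1 := Subsingleton.elim _ _
    rw [h1, UniqueFactorizationMonoid.normalizedFactors_one, hN]
    simp
  · have hnu : ¬ IsUnit f := by
      intro hu
      rw [Polynomial.isUnit_iff] at hu
      obtain ⟨r, _, hr⟩ := hu
      rw [← hr, natDegree_C] at hdeg
      omega
    obtain ⟨g, hgm, hgi, hgd⟩ := Polynomial.exists_monic_irreducible_factor f hnu
    obtain ⟨c, hc⟩ := hgd
    have hfne : f ≠ 0 := hfm.ne_zero
    have hgne : g ≠ 0 := hgm.ne_zero
    have hcne : c ≠ 0 := fun h => hfne (by rw [hc, h, mul_zero])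
    have hcm : c.Monic := hgm.of_mul_monic_left (hc ▸ hfm)
    have hdadd : g.natDegree + c.natDegree = N := by
      rw [← hdeg, hc, natDegree_mul hgne hcne]
    have hgpos : 0 < g.natDegree := hgi.natDegree_pos
    have hcsq : Squarefree c := hsf.squarefree_of_dvd ⟨g, by rw [hc, mul_comm]⟩
    have hcsign := ih c.natDegree (by omega) c hcm hcsq rfl
    have hfactors : Multiset.card (UniqueFactorizationMonoid.normalizedFactors (g * c)) =
        1 + Multiset.card (UniqueFactorizationMonoid.normalizedFactors c) := by
      rw [UniqueFactorizationMonoid.normalizedFactors_mul hgne hcne,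
        UniqueFactorizationMonoid.normalizedFactors_irreducible hgi,
        Multiset.card_add, Multiset.card_singleton]
    rw [hc, sign_frobPerm_mul hgm hcm (hc ▸ hsf), sign_frobPerm_irreducible hgi hgm,
      hcsign, ← pow_add, hfactors]
    congr 1
    omega

end

end SSRO

open SSRO in
theorem sum_sign_root_orderings (F : Type*) [Field F] [Fintype F] (K : Type*) [Field K]
    [Algebra F K] [IsAlgClosure F K] (n : ℕ) (hn : 1 ≤ n) (f : Polynomial F) (hf : f.Monic)
    (hdeg : f.natDegree = n) :
    (∑ᶠ p : (Fin n → K) × Equiv.Perm (Fin n),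
        if Polynomial.map (algebraMap F K) f =
              ∏ j : Fin n, (Polynomial.X - Polynomial.C (p.1 j)) ∧
            ∀ j, p.1 j ^ Fintype.card F = p.1 (p.2 j)
          then ((Equiv.Perm.sign p.2 : ℤˣ) : ℤ) else 0) =
      (-1) ^ n * n.factorial * polyMoebius f := by
  haveI : IsAlgClosed K := IsAlgClosure.isAlgClosed F
  set q := Fintype.card F with hq
  set ι := algebraMap F K with hι
  set P : Polynomial K := f.map ι with hP
  have hPmonic : P.Monic := hf.map ι
  have hPne : P ≠ 0 := hPmonic.ne_zero
  have hPdeg : P.natDegree = n := by rw [hP, hf.natDegree_map, hdeg]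
  have hsplit : P.Splits := IsAlgClosed.splits P
  have hcard_roots : Multiset.card P.roots = n := by
    have := hsplit.natDegree_eq_card_roots
    rw [hPdeg] at this
    exact this.symm
  have hprodm : ∀ z : Fin n → K, (∏ j : Fin n, (X - C (z j))) =
      ((Finset.univ.val.map z).map fun a => X - C a).prod := by
    intro z
    rw [Multiset.map_map, Finset.prod_eq_multiset_prod]
    rfl
  have hcond1 : ∀ z : Fin n → K,
      (P = ∏ j : Fin n, (X - C (z j))) ↔ Multiset.map z Finset.univ.val = P.roots := by
    intro z
    constructor
    · intro h
      rw [h, hprodm z, roots_multiset_prod_X_sub_C]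
    · intro h
      rw [hprodm z, h]
      exact hsplit.eq_prod_roots_of_monic hPmonic
  -- the support is contained in a finite set
  set T : Finset (Fin n → K) := Fintype.piFinset (fun _ => rootsK K f) with hT
  have hTmem : ∀ z : Fin n → K, (P = ∏ j : Fin n, (X - C (z j))) → z ∈ T := by
    intro z hz
    rw [hT, Fintype.mem_piFinset]
    intro j
    rw [mem_rootsK, Polynomial.mem_roots hPne]
    show P.IsRoot (z j)
    rw [Polynomial.IsRoot, hz, eval_prod]
    exact Finset.prod_eq_zero (Finset.mem_univ j) (by simp)
  have hsupp : Function.support (fun p : (Fin n → K) × Equiv.Perm (Fin n) =>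
      if P = (∏ j : Fin n, (X - C (p.1 j))) ∧ ∀ j, p.1 j ^ q = p.1 (p.2 j)
        then ((Equiv.Perm.sign p.2 : ℤˣ) : ℤ) else 0) ⊆
      ((T ×ˢ (Finset.univ : Finset (Equiv.Perm (Fin n))) :
        Finset ((Fin n → K) × Equiv.Perm (Fin n))) :
        Set ((Fin n → K) × Equiv.Perm (Fin n))) := by
    intro p hp
    rw [Function.mem_support] at hp
    by_cases hc : P = (∏ j : Fin n, (X - C (p.1 j))) ∧ ∀ j, p.1 j ^ q = p.1 (p.2 j)
    · simp only [Finset.coe_product, Set.mem_prod, Finset.mem_coe]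
      exact ⟨hTmem p.1 hc.1, Finset.mem_univ _⟩
    · exact absurd (if_neg hc) hp
  rw [finsum_eq_sum_of_support_subset _ hsupp, Finset.sum_product]
  by_cases hsf : Squarefree f
  · -- squarefree case
    have hsep : P.Separable := ((PerfectField.separable_iff_squarefree).2 hsf).map
    have hnodup : P.roots.Nodup := nodup_roots hsep
    have hRcard : (rootsK K f).card = n := by
      rw [rootsK, Multiset.toFinset_card_of_nodup hnodup]
      exact hcard_roots
    have hcardcoe : Fintype.card {x : K // x ∈ rootsK K f} = n := by
      rw [Fintype.card_coe, hRcard]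
    have hRval : (rootsK K f).val = P.roots := by
      rw [rootsK, Multiset.toFinset_val, Multiset.dedup_eq_self.2 hnodup]
    set s : ℤ := ((Equiv.Perm.sign (frobPerm K f) : ℤˣ) : ℤ) with hs
    have hinner : ∀ z ∈ T, (∑ σ : Equiv.Perm (Fin n),
        if P = (∏ j : Fin n, (X - C (z j))) ∧ ∀ j, z j ^ q = z (σ j)
          then ((Equiv.Perm.sign σ : ℤˣ) : ℤ) else 0) =
        if Multiset.map z Finset.univ.val = P.roots then s else 0 := by
      intro z _
      by_cases hzr : Multiset.map z Finset.univ.val = P.roots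
      · rw [if_pos hzr]
        have hzinj : Function.Injective z := by
          have hnod : (Multiset.map z Finset.univ.val).Nodup := by rw [hzr]; exact hnodup
          intro a b hab
          exact Multiset.inj_on_of_nodup_map hnod a (Finset.mem_univ a)
            b (Finset.mem_univ b) hab
        have hzmem : ∀ j, z j ∈ rootsK K f := by
          intro j
          rw [mem_rootsK, ← hzr]
          exact Multiset.mem_map_of_mem z (Finset.mem_univ j)
        set z' : Fin n → {x : K // x ∈ rootsK K f} := fun j => ⟨z j, hzmem j⟩ with hz'
        have hz'inj : Function.Injective z' := fun a b hab =>
          hzinj (congrArg Subtype.val hab)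
        have hz'bij : Function.Bijective z' :=
          (Fintype.bijective_iff_injective_and_card z').2 ⟨hz'inj, by rw [hcardcoe, Fintype.card_fin]⟩
        set e : Fin n ≃ {x : K // x ∈ rootsK K f} := Equiv.ofBijective z' hz'bij with he
        set σ₀ : Equiv.Perm (Fin n) := (e.symm.permCongr (frobPerm K f)) with hσ₀
        have hσ₀app : ∀ j, z (σ₀ j) = z j ^ q := by
          intro j
          have h1 : e (σ₀ j) = frobPerm K f (e j) := by
            rw [hσ₀, Equiv.permCongr_apply, Equiv.symm_symm, Equiv.apply_symm_apply]
          have h2 : (e (σ₀ j) : K) = z (σ₀ j) := rfl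
          have h3 : (e j : K) = z j := rfl
          rw [← h2, h1, frobPerm_apply, h3]
        rw [Finset.sum_eq_single σ₀]
        · rw [if_pos ⟨(hcond1 z).2 hzr, fun j => (hσ₀app j).symm⟩, hs, hσ₀,
            Equiv.Perm.sign_permCongr]
        · intro σ _ hσne
          refine if_neg (fun hcc => hσne ?_)
          apply Equiv.ext
          intro j
          apply hzinj
          rw [← hcc.2 j, hσ₀app j]
        · intro h
          exact absurd (Finset.mem_univ σ₀) h
      · rw [if_neg hzr]
        refine Finset.sum_eq_zero fun σ _ => if_neg (fun hcc => hzr ((hcond1 z).1 hcc.1))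
    rw [Finset.sum_congr rfl hinner, ← Finset.sum_filter, Finset.sum_const]
    -- count the enumerations
    have hcount : (T.filter fun z => Multiset.map z Finset.univ.val = P.roots).card =
        n.factorial := by
      have hcardperm : Fintype.card (Equiv.Perm (Fin n)) = n.factorial := by
        rw [Fintype.card_perm, Fintype.card_fin]
      rw [← hcardperm, ← Finset.card_univ]
      set e₀ : Fin n ≃ {x : K // x ∈ rootsK K f} :=
        (Fintype.equivFinOfCardEq hcardcoe).symm with he₀
      have huniv_map : ∀ (τ : Equiv.Perm (Fin n)),
          Finset.univ.val.map τ = Finset.univ.val := by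
        intro τ
        have := Finset.map_univ_equiv τ
        calc Finset.univ.val.map τ = (Finset.univ.map τ.toEmbedding).val := rfl
        _ = Finset.univ.val := by rw [this]
      have hbase : Multiset.map (fun j => (e₀ j : K)) Finset.univ.val = P.roots := by
        have h1 : Finset.univ.val.map e₀ =
            (Finset.univ : Finset {x : K // x ∈ rootsK K f}).val := by
          calc Finset.univ.val.map e₀ = (Finset.univ.map e₀.toEmbedding).val := rfl
          _ = _ := by rw [Finset.map_univ_equiv]
        calc Multiset.map (fun j => (e₀ j : K)) Finset.univ.val
            = Multiset.map Subtype.val (Finset.univ.val.map e₀) := by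
              rw [Multiset.map_map]; rfl
        _ = Multiset.map Subtype.val
              (Finset.univ : Finset {x : K // x ∈ rootsK K f}).val := by rw [h1]
        _ = (rootsK K f).val := by
              rw [Finset.univ_eq_attach]
              exact Multiset.attach_map_val _
        _ = P.roots := hRval
      refine (Finset.card_bij (fun (σ : Equiv.Perm (Fin n)) _ => fun j => (e₀ (σ j) : K)) ?_ ?_ ?_).symm
      · intro σ _
        rw [Finset.mem_filter]
        constructor
        · rw [hT, Fintype.mem_piFinset]
          exact fun j => (e₀ (σ j)).2
        · calc Multiset.map (fun j => (e₀ (σ j) : K)) Finset.univ.val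
              = Multiset.map (fun j => (e₀ j : K)) (Finset.univ.val.map σ) := by
                rw [Multiset.map_map]; rfl
          _ = P.roots := by rw [huniv_map σ, hbase]
      · intro σ₁ _ σ₂ _ hsig
        apply Equiv.ext
        intro j
        apply e₀.injective
        exact Subtype.ext (congrFun hsig j)
      · intro z hz
        rw [Finset.mem_filter] at hz
        obtain ⟨hzT, hzr⟩ := hz
        have hzinj : Function.Injective z := by
          have hnod : (Multiset.map z Finset.univ.val).Nodup := by rw [hzr]; exact hnodup
          intro a b hab
          exact Multiset.inj_on_of_nodup_map hnod a (Finset.mem_univ a)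
            b (Finset.mem_univ b) hab
        have hzmem : ∀ j, z j ∈ rootsK K f := by
          intro j
          rw [mem_rootsK, ← hzr]
          exact Multiset.mem_map_of_mem z (Finset.mem_univ j)
        set u : Fin n → Fin n := fun j => e₀.symm ⟨z j, hzmem j⟩ with hu
        have huinj : Function.Injective u := by
          intro a b hab
          apply hzinj
          have := congrArg (fun t => ((e₀ t : {x : K // x ∈ rootsK K f}) : K)) hab
          simpa [hu] using this
        have hubij : Function.Bijective u := Finite.injective_iff_bijective.1 huinj
        refine ⟨Equiv.ofBijective u hubij, Finset.mem_univ _, ?_⟩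
        funext j
        show ((e₀ (u j) : {x : K // x ∈ rootsK K f}) : K) = z j
        rw [hu]
        simp
    rw [hcount]
    -- final arithmetic
    have hsign := sign_frobPerm (K := K) n f hf hsf hdeg
    rw [polyMoebius, if_pos hsf]
    rw [hs, hsign]
    push_cast
    rw [pow_add]
    ring
  · -- non-squarefree case
    rw [polyMoebius, if_neg hsf, mul_zero]
    refine Finset.sum_eq_zero fun z _ => ?_
    by_cases hc1 : P = ∏ j : Fin n, (X - C (z j))
    · have hrep : ∃ i j : Fin n, i ≠ j ∧ z i = z j := by
        by_contra hno
        push_neg at hno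
        have hzinj : Function.Injective z := by
          intro a b hab
          by_contra hne
          exact hno a b hne hab
        have hPsep : P.Separable := by
          rw [hc1]
          exact (separable_prod_X_sub_C_iff).2 hzinj
        have hfsep : f.Separable := (Polynomial.separable_map ι).1 hPsep
        exact hsf ((PerfectField.separable_iff_squarefree).1 hfsep)
      obtain ⟨i, j, hij, hzeq⟩ := hrep
      have hswap : ∀ σ : Equiv.Perm (Fin n), (∀ k, z k ^ q = z (σ k)) →
          ∀ k, z k ^ q = z ((σ * Equiv.swap i j) k) := by
        intro σ hσ k
        rw [Equiv.Perm.mul_apply]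
        rcases eq_or_ne k i with rfl | hki
        · rw [Equiv.swap_apply_left, ← hσ j, hzeq]
        · rcases eq_or_ne k j with rfl | hkj
          · rw [Equiv.swap_apply_right, ← hσ i, hzeq]
          · rw [Equiv.swap_apply_of_ne_of_ne hki hkj]
            exact hσ k
      refine Finset.sum_involution (fun σ _ => σ * Equiv.swap i j) ?_ ?_ ?_ ?_
      · intro σ _
        by_cases hcnd : (P = ∏ j : Fin n, (X - C (z j))) ∧ ∀ k, z k ^ q = z (σ k)
        · have hcnd' : (P = ∏ j : Fin n, (X - C (z j))) ∧
              ∀ k, z k ^ q = z ((σ * Equiv.swap i j) k) := ⟨hcnd.1, hswap σ hcnd.2⟩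
          rw [if_pos hcnd, if_pos hcnd', Equiv.Perm.sign_mul, Equiv.Perm.sign_swap hij]
          push_cast
          ring
        · have hcnd' : ¬ ((P = ∏ j : Fin n, (X - C (z j))) ∧
              ∀ k, z k ^ q = z ((σ * Equiv.swap i j) k)) := by
            intro hcc
            apply hcnd
            refine ⟨hcc.1, ?_⟩
            have := hswap _ hcc.2
            rwa [mul_assoc, Equiv.swap_mul_self, mul_one] at this
          rw [if_neg hcnd, if_neg hcnd', add_zero]
      · intro σ _ _
        intro heq
        have : Equiv.swap i j = 1 := by
          have := congrArg (fun t => σ⁻¹ * t) heq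
          simpa [← mul_assoc] using this
        exact hij (Equiv.swap_eq_one_iff.1 this)
      · intro σ _
        exact Finset.mem_univ _
      · intro σ _
        show σ * Equiv.swap i j * Equiv.swap i j = σ
        rw [mul_assoc, Equiv.swap_mul_self, mul_one]
    · exact Finset.sum_eq_zero fun σ _ => if_neg fun hcc => hc1 hcc.1
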